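/- arXiv:2601.13519 — 2 statements merged into one kernel-verified Lean document; each statement's English description precedes it below -/
import Mathlib

section
/- (OGD G* regret bound) Let ℓ_1,...,ℓ_T : R^n → R be convex and L-smooth, let X be closed convex with diameter at most D, and run projected online gradient descent x^{t+1} = Π_X[x^t − η∇ℓ_t(x^t)] with η ∈ (0, 1/L). Then for every x ∈ X: Σ_{t=1}^T [ℓ_t(x^t) − ℓ_t(x)] ≤ ‖x^1 − x‖²/(2η) + (η/(2(1 − ηL)))·Σ_{t=1}^T ‖∇ℓ_t(x)‖². -/
open Finset
open scoped RealInnerProductSpace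

variable {E : Type*} [NormedAddCommGroup E] [InnerProductSpace ℝ E] [CompleteSpace E]

lemma curveDeriv (f : E → ℝ) (hf : Differentiable ℝ f) (a v : E) (t : ℝ) :
    HasDerivAt (fun s : ℝ => f (a + s • v)) ⟪gradient f (a + t • v), v⟫ t := by
  have h2 := ((hf (a + t • v)).hasGradientAt).hasFDerivAt
  have h3 : HasDerivAt (fun s : ℝ => a + s • v) v t := by
    simpa using ((hasDerivAt_id t).smul_const v).const_add a
  have := h2.comp_hasDerivAt t h3
  exact this.congr_deriv (by simp [InnerProductSpace.toDual_apply_apply])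

lemma grad_ineq (f : E → ℝ) (hc : ConvexOn ℝ Set.univ f) (hf : Differentiable ℝ f) (a b : E) :
    f a + ⟪gradient f a, b - a⟫ ≤ f b := by
  set v := b - a with hv
  set g : ℝ → ℝ := fun s => f (a + s • v) with hg
  have hgd : ∀ t : ℝ, HasDerivAt g ⟪gradient f (a + t • v), v⟫ t := fun t =>
    curveDeriv f hf a v t
  have hgc : ConvexOn ℝ Set.univ g := by
    have h0 := hc.comp_affineMap (AffineMap.lineMap a b : ℝ →ᵃ[ℝ] E)
    rw [Set.preimage_univ] at h0
    have heq : (f ∘ (AffineMap.lineMap a b : ℝ →ᵃ[ℝ] E)) = g := by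
      funext t
      simp only [Function.comp, AffineMap.lineMap_apply, hg, vsub_eq_sub, vadd_eq_add]
      rw [add_comm]
    rwa [heq] at h0
  have hslope := hgc.deriv_le_slope (Set.mem_univ (0:ℝ)) (Set.mem_univ (1:ℝ)) one_pos
    (hgd 0).differentiableAt
  rw [(hgd 0).deriv] at hslope
  have h1 : g 1 = f b := by simp [hg, hv]
  have h0 : g 0 = f a := by simp [hg]
  have hsl : slope g 0 1 = g 1 - g 0 := by simp [slope]
  rw [hsl, h0, h1] at hslope
  simpa using (by linarith [hslope] : f a + ⟪gradient f (a + (0:ℝ) • v), v⟫ ≤ f b)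

lemma descent_lemma (f : E → ℝ) (hf : Differentiable ℝ f) {L : ℝ} (hL : 0 < L)
    (hs : ∀ p q, ‖gradient f p - gradient f q‖ ≤ L * ‖p - q‖) (a b : E) :
    f b ≤ f a + ⟪gradient f a, b - a⟫ + L / 2 * ‖b - a‖ ^ 2 := by
  set v := b - a with hv
  set c := ⟪gradient f a, v⟫ with hcc
  set h : ℝ → ℝ := fun t => f (a + t • v) - t * c - L * ‖v‖ ^ 2 / 2 * t ^ 2 with hh
  have hd : ∀ t : ℝ, HasDerivAt h
      (⟪gradient f (a + t • v), v⟫ - c - L * ‖v‖ ^ 2 * t) t := by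
    intro t
    have d1 := curveDeriv f hf a v t
    have d2 : HasDerivAt (fun s : ℝ => s * c) c t := by
      simpa using (hasDerivAt_id t).mul_const c
    have d3 : HasDerivAt (fun s : ℝ => L * ‖v‖ ^ 2 / 2 * s ^ 2) (L * ‖v‖ ^ 2 * t) t := by
      have := (hasDerivAt_pow 2 t).const_mul (L * ‖v‖ ^ 2 / 2)
      exact this.congr_deriv (by norm_num; ring)
    exact (d1.sub d2).sub d3
  have hdiff : Differentiable ℝ h := fun t => (hd t).differentiableAt
  have anti : AntitoneOn h (Set.Icc (0:ℝ) 1) := by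
    apply antitoneOn_of_deriv_nonpos (convex_Icc 0 1) hdiff.continuous.continuousOn
      hdiff.differentiableOn
    intro t ht
    rw [interior_Icc] at ht
    rw [(hd t).deriv]
    have hib : ⟪gradient f (a + t • v) - gradient f a, v⟫ ≤ L * t * ‖v‖ ^ 2 := by
      calc ⟪gradient f (a + t • v) - gradient f a, v⟫
          ≤ ‖gradient f (a + t • v) - gradient f a‖ * ‖v‖ := real_inner_le_norm _ _
        _ ≤ (L * ‖a + t • v - a‖) * ‖v‖ := by
            apply mul_le_mul_of_nonneg_right (hs _ _) (norm_nonneg v)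
        _ = L * t * ‖v‖ ^ 2 := by
            rw [add_sub_cancel_left, norm_smul, Real.norm_eq_abs, abs_of_pos ht.1]
            ring
    rw [inner_sub_left] at hib
    nlinarith [hib]
  have h10 := anti (Set.left_mem_Icc.mpr zero_le_one) (Set.right_mem_Icc.mpr zero_le_one)
    zero_le_one
  have e1 : h 1 = f b - c - L * ‖v‖ ^ 2 / 2 := by simp [hh, hv]
  have e0 : h 0 = f a := by simp [hh]
  rw [e1, e0] at h10
  have : L / 2 * ‖b - a‖ ^ 2 = L * ‖v‖ ^ 2 / 2 := by rw [hv]; ring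
  rw [this]
  linarith [h10]

lemma cocoercive (f : E → ℝ) (hc : ConvexOn ℝ Set.univ f) (hf : Differentiable ℝ f)
    {L : ℝ} (hL : 0 < L) (hs : ∀ p q, ‖gradient f p - gradient f q‖ ≤ L * ‖p - q‖) (a b : E) :
    f a + ⟪gradient f a, b - a⟫ + 1 / (2 * L) * ‖gradient f b - gradient f a‖ ^ 2 ≤ f b := by
  set Ga := gradient f a with hGa
  set Gb := gradient f b with hGb
  set d := Gb - Ga with hd
  set w := b - (1 / L) • d with hw
  have h1 := grad_ineq f hc hf a w
  have h2 := descent_lemma f hf hL hs b w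
  have ewb : w - b = -((1 / L) • d) := by rw [hw]; abel
  have e1 : ⟪Gb, w - b⟫ = -(1 / L) * ⟪Gb, d⟫ := by
    rw [ewb, inner_neg_right, real_inner_smul_right]; ring
  have e2 : ‖w - b‖ ^ 2 = (1 / L) ^ 2 * ‖d‖ ^ 2 := by
    rw [ewb, norm_neg, norm_smul, Real.norm_eq_abs, abs_of_pos (by positivity : (0:ℝ) < 1 / L)]
    ring
  have e3 : ⟪Ga, w - a⟫ = ⟪Ga, b - a⟫ - (1 / L) * ⟪Ga, d⟫ := by
    have : w - a = (b - a) - (1 / L) • d := by rw [hw]; abel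
    rw [this, inner_sub_right, real_inner_smul_right]
  have e4 : ⟪Gb, d⟫ - ⟪Ga, d⟫ = ‖d‖ ^ 2 := by
    rw [← inner_sub_left, ← hd, real_inner_self_eq_norm_sq]
  rw [e1, e2] at h2
  rw [e3] at h1
  have e5 : L / 2 * ((1 / L) ^ 2 * ‖d‖ ^ 2) = 1 / (2 * L) * ‖d‖ ^ 2 := by
    field_simp
  have e6 : (1 / L) * ⟪Gb, d⟫ - (1 / L) * ⟪Ga, d⟫ = (1 / L) * ‖d‖ ^ 2 := by
    rw [← mul_sub, e4]
  have e7 : (1 / L) * ‖d‖ ^ 2 = 2 * (1 / (2 * L) * ‖d‖ ^ 2) := by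
    field_simp
  linarith [h1, h2, e5, e6, e7]

lemma proj_sq {X : Set E} (hXconv : Convex ℝ X)
    (proj : E → E) (hprojX : ∀ y, proj y ∈ X)
    (hproj : ∀ y, ∀ z ∈ X, ‖y - proj y‖ ≤ ‖y - z‖) (u : E) {w : E} (hw : w ∈ X) :
    ‖proj u - w‖ ^ 2 ≤ ‖u - w‖ ^ 2 := by
  set p := proj u with hp
  haveI : Nonempty X := ⟨⟨p, hprojX u⟩⟩
  have heq : ‖u - p‖ = ⨅ z : X, ‖u - z‖ := by
    apply le_antisymm
    · exact le_ciInf fun z => hproj u z z.2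
    · have hbdd : BddBelow (Set.range fun z : X => ‖u - (z : E)‖) := by
        refine ⟨0, ?_⟩
        rintro r ⟨z, rfl⟩
        exact norm_nonneg _
      exact ciInf_le hbdd ⟨p, hprojX u⟩
  have hobtuse := (norm_eq_iInf_iff_real_inner_le_zero hXconv (hprojX u)).mp heq w hw
  have hexp : u - w = (u - p) + (p - w) := by abel
  have : ‖u - w‖ ^ 2 = ‖u - p‖ ^ 2 + 2 * ⟪u - p, p - w⟫ + ‖p - w‖ ^ 2 := by
    rw [hexp, @norm_add_sq_real]
  have hne : ⟪u - p, p - w⟫ = -⟪u - p, w - p⟫ := by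
    rw [← inner_neg_right]; congr 1; abel
  nlinarith [sq_nonneg ‖u - p‖, hobtuse, this, hne]
theorem stmt8 (n T : ℕ) (L D η : ℝ) (hL : 0 < L) (hD : 0 < D)
    (hη : η ∈ Set.Ioo 0 (1 / L))
    (ℓ : ℕ → EuclideanSpace ℝ (Fin n) → ℝ)
    (hconv : ∀ t, ConvexOn ℝ Set.univ (ℓ t))
    (hdiff : ∀ t, Differentiable ℝ (ℓ t))
    (hsmooth : ∀ t, ∀ x y, ‖gradient (ℓ t) x - gradient (ℓ t) y‖ ≤ L * ‖x - y‖)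
    (X : Set (EuclideanSpace ℝ (Fin n))) (hXconv : Convex ℝ X) (hXclosed : IsClosed X)
    (hXdiam : Metric.diam X ≤ D)
    (proj : EuclideanSpace ℝ (Fin n) → EuclideanSpace ℝ (Fin n))
    (hprojX : ∀ y, proj y ∈ X)
    (hproj : ∀ y, ∀ z ∈ X, ‖y - proj y‖ ≤ ‖y - z‖)
    (x : ℕ → EuclideanSpace ℝ (Fin n)) (hx0 : x 0 ∈ X)
    (hrec : ∀ t < T, x (t + 1) = proj (x t - η • gradient (ℓ t) (x t))) :
    ∀ y ∈ X,
      ∑ t ∈ Finset.range T, (ℓ t (x t) - ℓ t y) ≤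
        ‖x 0 - y‖ ^ 2 / (2 * η) +
          (η / (2 * (1 - η * L))) * ∑ t ∈ Finset.range T, ‖gradient (ℓ t) y‖ ^ 2 := by
  intro y hy
  obtain ⟨hη0, hη2⟩ := hη
  have hηL : η * L < 1 := (lt_div_iff₀ hL).mp hη2
  have hc1 : 0 < 1 - η * L := by linarith
  have h2η : 0 < 2 * η := by linarith
  have hηne : η ≠ 0 := ne_of_gt hη0
  have hLne : L ≠ 0 := ne_of_gt hL
  have hc1ne : (1 : ℝ) - η * L ≠ 0 := ne_of_gt hc1
  have key : ∀ t, t < T → ℓ t (x t) - ℓ t y ≤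
      (‖x t - y‖ ^ 2 - ‖x (t + 1) - y‖ ^ 2) / (2 * η)
        + η / (2 * (1 - η * L)) * ‖gradient (ℓ t) y‖ ^ 2 := by
    intro t ht
    set g := gradient (ℓ t) (x t) with hgdef
    set h := gradient (ℓ t) y with hhdef
    have hstep1 : ‖x (t + 1) - y‖ ^ 2 ≤ ‖(x t - η • g) - y‖ ^ 2 := by
      rw [hrec t ht]
      exact proj_sq hXconv proj hprojX hproj _ hy
    have hexp : ‖(x t - η • g) - y‖ ^ 2
        = ‖x t - y‖ ^ 2 - 2 * η * ⟪g, x t - y⟫ + η ^ 2 * ‖g‖ ^ 2 := by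
      have e0 : (x t - η • g) - y = (x t - y) - η • g := by abel
      rw [e0, @norm_sub_sq_real, real_inner_smul_right, norm_smul, Real.norm_eq_abs,
        abs_of_pos hη0, mul_pow, real_inner_comm]
      ring
    have hco := cocoercive (ℓ t) (hconv t) (hdiff t) hL (hsmooth t) (x t) y
    have einner : ⟪g, y - x t⟫ = -⟪g, x t - y⟫ := by
      rw [← inner_neg_right]
      congr 1
      abel
    rw [einner] at hco
    set A := ‖h - g‖ with hA
    set B := ‖h‖ with hB
    have hA0 : 0 ≤ A := norm_nonneg _
    have hB0 : 0 ≤ B := norm_nonneg _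
    have hgle : ‖g‖ ≤ A + B := by
      calc ‖g‖ = ‖h - (h - g)‖ := by congr 1; abel
        _ ≤ ‖h‖ + ‖h - g‖ := norm_sub_le h (h - g)
        _ = A + B := by ring
    have hgsq : η ^ 2 * ‖g‖ ^ 2 ≤ η ^ 2 * (A + B) ^ 2 := by
      have h1 : ‖g‖ ^ 2 ≤ (A + B) ^ 2 := by nlinarith [norm_nonneg g]
      nlinarith [sq_nonneg η]
    have hkey2 : η ^ 2 * (A + B) ^ 2 ≤ (η / L) * A ^ 2 + η ^ 2 / (1 - η * L) * B ^ 2 := by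
      have hident : (η / L) * A ^ 2 + η ^ 2 / (1 - η * L) * B ^ 2 - η ^ 2 * (A + B) ^ 2
          = (η / (L * (1 - η * L))) * ((1 - η * L) * A - (η * L) * B) ^ 2 := by
        field_simp
        ring
      have hpos : 0 ≤ (η / (L * (1 - η * L))) * ((1 - η * L) * A - (η * L) * B) ^ 2 := by
        apply mul_nonneg
        · positivity
        · positivity
      linarith [hident, hpos]
    have step := mul_le_mul_of_nonneg_left hco h2η.le
    have efinal : 2 * η * (ℓ t (x t) - ℓ t y) ≤
        ‖x t - y‖ ^ 2 - ‖x (t + 1) - y‖ ^ 2 + η ^ 2 / (1 - η * L) * B ^ 2 := by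
      have c1 : 2 * η * (1 / (2 * L) * A ^ 2) = η / L * A ^ 2 := by
        field_simp
      linarith [step, hstep1, hexp, hgsq, hkey2, c1]
    have hdiv := (div_le_div_iff_of_pos_right h2η).mpr efinal
    have eX : (2 * η * (ℓ t (x t) - ℓ t y)) / (2 * η) = ℓ t (x t) - ℓ t y := by
      field_simp
    have eY : (‖x t - y‖ ^ 2 - ‖x (t + 1) - y‖ ^ 2 + η ^ 2 / (1 - η * L) * B ^ 2) / (2 * η)
        = (‖x t - y‖ ^ 2 - ‖x (t + 1) - y‖ ^ 2) / (2 * η)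
          + η / (2 * (1 - η * L)) * B ^ 2 := by
      field_simp
    rw [eX, eY] at hdiv
    exact hdiv
  calc ∑ t ∈ Finset.range T, (ℓ t (x t) - ℓ t y)
      ≤ ∑ t ∈ Finset.range T, ((‖x t - y‖ ^ 2 - ‖x (t + 1) - y‖ ^ 2) / (2 * η)
          + η / (2 * (1 - η * L)) * ‖gradient (ℓ t) y‖ ^ 2) :=
        Finset.sum_le_sum fun t ht => key t (Finset.mem_range.mp ht)
    _ = (∑ t ∈ Finset.range T, (‖x t - y‖ ^ 2 - ‖x (t + 1) - y‖ ^ 2)) / (2 * η)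
          + (η / (2 * (1 - η * L))) * ∑ t ∈ Finset.range T, ‖gradient (ℓ t) y‖ ^ 2 := by
        rw [Finset.sum_add_distrib, ← Finset.sum_div, ← Finset.mul_sum]
    _ = (‖x 0 - y‖ ^ 2 - ‖x T - y‖ ^ 2) / (2 * η)
          + (η / (2 * (1 - η * L))) * ∑ t ∈ Finset.range T, ‖gradient (ℓ t) y‖ ^ 2 := by
        rw [Finset.sum_range_sub' (fun t => ‖x t - y‖ ^ 2)]
    _ ≤ ‖x 0 - y‖ ^ 2 / (2 * η)
          + (η / (2 * (1 - η * L))) * ∑ t ∈ Finset.range T, ‖gradient (ℓ t) y‖ ^ 2 := by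
        have h1 : (‖x 0 - y‖ ^ 2 - ‖x T - y‖ ^ 2) / (2 * η) ≤ ‖x 0 - y‖ ^ 2 / (2 * η) :=
          (div_le_div_iff_of_pos_right h2η).mpr (sub_le_self _ (sq_nonneg _))
        linarith
end

section
/- (OGD with larger steps) Under the same setting as the OGD G* bound but with η ∈ (0, 2/L), online gradient descent satisfies, for every x ∈ X: Σ_{t=1}^T [ℓ_t(x^t) − ℓ_t(x)] ≤ ‖x^1 − x‖²/((2 − ηL)η) + (η/(2 − ηL))·[L·L_T(x) + (1/(2 − ηL))·G_T(x)], where L_T(x) = Σ_t [ℓ_t(x) − inf ℓ_t] and G_T(x) = Σ_t ‖∇ℓ_t(x)‖². -/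
open Finset Set
open scoped RealInnerProductSpace

variable {F : Type*} [NormedAddCommGroup F] [InnerProductSpace ℝ F] [CompleteSpace F]

private lemma line_hasDerivAt {f : F → ℝ} {G : F → F}
    (hG : ∀ z, HasGradientAt f (G z) z) (x d : F) (t : ℝ) :
    HasDerivAt (fun s : ℝ => f (x + s • d)) ⟪G (x + t • d), d⟫ t := by
  have hg := hasGradientAt_iff_hasFDerivAt.mp (hG (x + t • d))
  have hline : HasDerivAt (fun s : ℝ => x + s • d) d t := by
    simpa using ((hasDerivAt_id t).smul_const d).const_add x
  have := hg.comp_hasDerivAt t hline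
  simpa [InnerProductSpace.toDual_apply_apply, Function.comp_def] using this

private lemma inner_right_convexOn (c : F) :
    ConvexOn ℝ Set.univ (fun z : F => ⟪c, z⟫) :=
  ⟨convex_univ, fun a _ b _ p q _ _ _ =>
    le_of_eq (by simp [inner_add_right, real_inner_smul_right])⟩

private lemma convex_first_order {f : F → ℝ} {G : F → F}
    (hconv : ConvexOn ℝ Set.univ f)
    (hG : ∀ z, HasGradientAt f (G z) z) (x y : F) :
    f x + ⟪G x, y - x⟫ ≤ f y := by
  set d := y - x with hd
  have hq : ConvexOn ℝ Set.univ (fun s : ℝ => f (x + s • d)) := by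
    have h1 := hconv.comp_affineMap (AffineMap.lineMap x y : ℝ →ᵃ[ℝ] F)
    have h2 : (fun s : ℝ => f (x + s • d)) = f ∘ (AffineMap.lineMap x y : ℝ →ᵃ[ℝ] F) := by
      funext s
      show f (x + s • d) = f (AffineMap.lineMap x y s)
      rw [AffineMap.lineMap_apply_module, hd]
      congr 1
      module
    rw [h2]
    simpa using h1
  have hd0 : HasDerivAt (fun s : ℝ => f (x + s • d)) ⟪G x, d⟫ 0 := by
    have := line_hasDerivAt hG x d 0
    simpa using this
  have hs := hq.le_slope_of_hasDerivAt (mem_univ (0:ℝ)) (mem_univ (1:ℝ)) zero_lt_one hd0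
  rw [slope_def_field] at hs
  simp only [zero_smul, add_zero, one_smul, sub_zero, div_one] at hs
  have hxy : x + d = y := by rw [hd]; abel
  rw [hxy] at hs
  linarith

private lemma descent {f : F → ℝ} {G : F → F} {L : ℝ} (hL : 0 < L)
    (hG : ∀ z, HasGradientAt f (G z) z)
    (hlip : ∀ a b, ‖G a - G b‖ ≤ L * ‖a - b‖) (x y : F) :
    f y ≤ f x + ⟪G x, y - x⟫ + L / 2 * ‖y - x‖ ^ 2 := by
  set d := y - x with hd
  set φ : ℝ → ℝ := fun s => ⟪G (x + s • d), d⟫ with hφ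
  have hGcont : Continuous G := by
    have : LipschitzWith (Real.toNNReal L) G := by
      apply LipschitzWith.of_dist_le_mul
      intro a b
      rw [dist_eq_norm, dist_eq_norm, Real.coe_toNNReal _ hL.le]
      exact hlip a b
    exact this.continuous
  have hφcont : Continuous φ :=
    (hGcont.comp (by continuity)).inner continuous_const
  have hq : ∀ t ∈ Set.uIcc (0:ℝ) 1, HasDerivAt (fun s : ℝ => f (x + s • d)) (φ t) t :=
    fun t _ => line_hasDerivAt hG x d t
  have hInt : IntervalIntegrable φ MeasureTheory.volume 0 1 :=
    hφcont.intervalIntegrable 0 1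
  have hFTC : ∫ s in (0:ℝ)..1, φ s = f (x + (1:ℝ) • d) - f (x + (0:ℝ) • d) :=
    intervalIntegral.integral_eq_sub_of_hasDerivAt hq hInt
  have hbound : ∀ s ∈ Set.Icc (0:ℝ) 1, φ s ≤ ⟪G x, d⟫ + (L * ‖d‖ ^ 2) * s := by
    intro s hs
    have h1 : φ s - ⟪G x, d⟫ = ⟪G (x + s • d) - G x, d⟫ := by
      rw [inner_sub_left]
    have h2 : ⟪G (x + s • d) - G x, d⟫ ≤ ‖G (x + s • d) - G x‖ * ‖d‖ :=
      real_inner_le_norm _ _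
    have h3 : ‖G (x + s • d) - G x‖ ≤ L * (s * ‖d‖) := by
      have := hlip (x + s • d) x
      simpa [norm_smul, abs_of_nonneg hs.1] using this
    have h4 : ‖G (x + s • d) - G x‖ * ‖d‖ ≤ L * (s * ‖d‖) * ‖d‖ :=
      mul_le_mul_of_nonneg_right h3 (norm_nonneg _)
    nlinarith [norm_nonneg d]
  have hmono : ∫ s in (0:ℝ)..1, φ s ≤ ∫ s in (0:ℝ)..1, (⟪G x, d⟫ + (L * ‖d‖ ^ 2) * s) := by
    apply intervalIntegral.integral_mono_on zero_le_one hInt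
    · exact (continuous_const.add (continuous_const.mul continuous_id')).intervalIntegrable 0 1
    · exact hbound
  have hRHS : ∫ s in (0:ℝ)..1, (⟪G x, d⟫ + (L * ‖d‖ ^ 2) * s) = ⟪G x, d⟫ + L / 2 * ‖d‖ ^ 2 := by
    rw [intervalIntegral.integral_add (g := fun s => (L * ‖d‖ ^ 2) * s) (intervalIntegrable_const)
      ((continuous_const.mul continuous_id').intervalIntegrable 0 1)]
    rw [intervalIntegral.integral_const, intervalIntegral.integral_const_mul]
    simp [integral_id]
    ring
  have e1 : x + (1:ℝ) • d = y := by rw [hd]; simp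
  have e0 : x + (0:ℝ) • d = x := by simp
  rw [e1, e0] at hFTC
  rw [hRHS] at hmono
  linarith [hFTC ▸ hmono]

private lemma descent_step {f : F → ℝ} {G : F → F} {L : ℝ} (hL : 0 < L)
    (hG : ∀ z, HasGradientAt f (G z) z)
    (hlip : ∀ a b, ‖G a - G b‖ ≤ L * ‖a - b‖) (x : F) :
    f (x - L⁻¹ • G x) ≤ f x - 1 / (2 * L) * ‖G x‖ ^ 2 := by
  have h1 := descent hL hG hlip x (x - L⁻¹ • G x)
  have e1 : (x - L⁻¹ • G x) - x = -(L⁻¹ • G x) := by abel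
  rw [e1, inner_neg_right, real_inner_smul_right, real_inner_self_eq_norm_sq,
    norm_neg, norm_smul, Real.norm_eq_abs, abs_of_pos (inv_pos.mpr hL)] at h1
  have e4 : -(L⁻¹ * ‖G x‖ ^ 2) + L / 2 * (L⁻¹ * ‖G x‖) ^ 2 = -(1 / (2 * L) * ‖G x‖ ^ 2) := by
    field_simp
    ring
  linarith

private lemma self_bound {f : F → ℝ} {G : F → F} {L : ℝ} (hL : 0 < L)
    (hG : ∀ z, HasGradientAt f (G z) z)
    (hlip : ∀ a b, ‖G a - G b‖ ≤ L * ‖a - b‖)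
    (hbdd : BddBelow (Set.range f)) (x : F) :
    ‖G x‖ ^ 2 ≤ 2 * L * (f x - sInf (Set.range f)) := by
  have h1 := descent_step hL hG hlip x
  have h2 : sInf (Set.range f) ≤ f (x - L⁻¹ • G x) := csInf_le hbdd ⟨_, rfl⟩
  have h3 : 1 / (2 * L) * ‖G x‖ ^ 2 ≤ f x - sInf (Set.range f) := by linarith
  calc ‖G x‖ ^ 2 = 2 * L * (1 / (2 * L) * ‖G x‖ ^ 2) := by field_simp
    _ ≤ 2 * L * (f x - sInf (Set.range f)) :=
        mul_le_mul_of_nonneg_left h3 (by positivity)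

private lemma coco {f : F → ℝ} {G : F → F} {L : ℝ} (hL : 0 < L)
    (hconv : ConvexOn ℝ Set.univ f)
    (hG : ∀ z, HasGradientAt f (G z) z)
    (hlip : ∀ a b, ‖G a - G b‖ ≤ L * ‖a - b‖) (x y : F) :
    f x - f y ≤ ⟪G x, x - y⟫ - 1 / (2 * L) * ‖G x - G y‖ ^ 2 := by
  set ψ : F → ℝ := fun z => f z + ⟪-(G x), z⟫ with hψ
  have hGψ : ∀ z, HasGradientAt ψ (G z - G x) z := by
    intro z
    have h1 : HasFDerivAt f (InnerProductSpace.toDual ℝ F (G z)) z :=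
      hasGradientAt_iff_hasFDerivAt.mp (hG z)
    have h2 : HasFDerivAt (fun w : F => ⟪-(G x), w⟫)
        ((InnerProductSpace.toDual ℝ F (-(G x))) : F →L[ℝ] ℝ) z := by
      have := ((InnerProductSpace.toDual ℝ F (-(G x))) : F →L[ℝ] ℝ).hasFDerivAt (x := z)
      convert this using 1
      funext w
      simp [InnerProductSpace.toDual_apply_apply]
    have h3 := h1.add h2
    rw [hasGradientAt_iff_hasFDerivAt]
    have e : InnerProductSpace.toDual ℝ F (G z - G x) =
        InnerProductSpace.toDual ℝ F (G z) + InnerProductSpace.toDual ℝ F (-(G x)) := by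
      rw [← map_add]; congr 1; abel
    rw [e]
    exact h3
  have hψconv : ConvexOn ℝ Set.univ ψ := hconv.add (inner_right_convexOn (-(G x)))
  have hψlip : ∀ a b, ‖(G a - G x) - (G b - G x)‖ ≤ L * ‖a - b‖ := by
    intro a b
    simpa [sub_sub_sub_cancel_right] using hlip a b
  have hmin : ψ x ≤ ψ (y - L⁻¹ • (G y - G x)) := by
    have := convex_first_order hψconv hGψ x (y - L⁻¹ • (G y - G x))
    simpa using this
  have hstep := descent_step hL hGψ hψlip y
  have key : ψ x ≤ ψ y - 1 / (2 * L) * ‖G y - G x‖ ^ 2 := le_trans hmin hstep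
  rw [hψ] at key
  simp only [inner_neg_left] at key
  have hxy : ⟪G x, x - y⟫ = ⟪G x, x⟫ - ⟪G x, y⟫ := inner_sub_right _ _ _
  rw [norm_sub_rev] at key
  linarith

private lemma proj_contract {X : Set F} (hXconv : Convex ℝ X)
    (proj : F → F) (hprojX : ∀ y, proj y ∈ X)
    (hproj : ∀ y, ∀ z ∈ X, ‖y - proj y‖ ≤ ‖y - z‖)
    (w : F) {y : F} (hy : y ∈ X) :
    ‖proj w - y‖ ^ 2 ≤ ‖w - y‖ ^ 2 := by
  set p := proj w with hp
  haveI : Nonempty X := ⟨⟨p, hprojX w⟩⟩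
  have hinf : ‖w - p‖ = ⨅ z : X, ‖w - z‖ := by
    apply le_antisymm
    · exact le_ciInf fun z => hproj w z z.2
    · have hbdd : BddBelow (Set.range fun z : X => ‖w - (z : F)‖) := by
        refine ⟨0, ?_⟩
        rintro _ ⟨z, rfl⟩
        exact norm_nonneg _
      exact ciInf_le hbdd ⟨p, hprojX w⟩
  have hobs := (norm_eq_iInf_iff_real_inner_le_zero hXconv (hprojX w)).mp hinf y hy
  have e : ‖w - y‖ ^ 2 = ‖w - p‖ ^ 2 - 2 * ⟪w - p, y - p⟫ + ‖y - p‖ ^ 2 := by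
    have := @norm_sub_sq_real F _ _ (w - p) (y - p)
    have e2 : (w - p) - (y - p) = w - y := by abel
    rw [e2] at this
    exact this
  have e4 : ‖p - y‖ ^ 2 = ‖y - p‖ ^ 2 := by rw [norm_sub_rev]
  rw [← hp] at hobs
  linarith [e, hobs, e4, sq_nonneg ‖w - p‖]

set_option maxHeartbeats 1000000 in
theorem stmt10 (n T : ℕ) (L D η : ℝ) (hL : 0 < L) (hD : 0 < D)
    (hη : η ∈ Set.Ioo 0 (2 / L))
    (ℓ : ℕ → EuclideanSpace ℝ (Fin n) → ℝ)
    (hconv : ∀ t, ConvexOn ℝ Set.univ (ℓ t))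
    (hdiff : ∀ t, Differentiable ℝ (ℓ t))
    (hsmooth : ∀ t, ∀ x y, ‖gradient (ℓ t) x - gradient (ℓ t) y‖ ≤ L * ‖x - y‖)
    (hbdd : ∀ t, BddBelow (Set.range (ℓ t)))
    (X : Set (EuclideanSpace ℝ (Fin n))) (hXconv : Convex ℝ X) (hXclosed : IsClosed X)
    (hXdiam : Metric.diam X ≤ D)
    (proj : EuclideanSpace ℝ (Fin n) → EuclideanSpace ℝ (Fin n))
    (hprojX : ∀ y, proj y ∈ X)
    (hproj : ∀ y, ∀ z ∈ X, ‖y - proj y‖ ≤ ‖y - z‖)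
    (x : ℕ → EuclideanSpace ℝ (Fin n)) (hx0 : x 0 ∈ X)
    (hrec : ∀ t < T, x (t + 1) = proj (x t - η • gradient (ℓ t) (x t))) :
    ∀ y ∈ X,
      ∑ t ∈ Finset.range T, (ℓ t (x t) - ℓ t y) ≤
        ‖x 0 - y‖ ^ 2 / ((2 - η * L) * η) +
          (η / (2 - η * L)) *
            (L * (∑ t ∈ Finset.range T, (ℓ t y - sInf (Set.range (ℓ t)))) +
              (1 / (2 - η * L)) * ∑ t ∈ Finset.range T, ‖gradient (ℓ t) y‖ ^ 2) := by
  intro y hy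
  obtain ⟨hη0, hη2'⟩ := hη
  have hs2 : η * L < 2 := by
    have := (lt_div_iff₀ hL).mp hη2'
    linarith
  have hA : 0 < 2 - η * L := by linarith
  have hGt : ∀ t z, HasGradientAt (ℓ t) (gradient (ℓ t) z) z :=
    fun t z => ((hdiff t) z).hasGradientAt
  have key : ∀ t ∈ Finset.range T,
      ℓ t (x t) - ℓ t y ≤
        (‖x t - y‖ ^ 2 - ‖x (t+1) - y‖ ^ 2) / ((2 - η * L) * η) +
          (η * L / (2 - η * L) * (ℓ t y - sInf (Set.range (ℓ t))) +
            η / (2 - η * L) ^ 2 * ‖gradient (ℓ t) y‖ ^ 2) := by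
    intro t htT
    have ht : t < T := Finset.mem_range.mp htT
    set g := gradient (ℓ t) (x t) with hg
    set h := gradient (ℓ t) y with hh
    set m := sInf (Set.range (ℓ t)) with hm
    set S := ‖x t - y‖ ^ 2 with hS
    set P := ‖x (t+1) - y‖ ^ 2 with hP
    set a := ‖g‖ with ha
    set b := ‖g - h‖ with hb
    set c := ‖h‖ with hc
    set r := ℓ t (x t) - ℓ t y with hr
    set q := ℓ t y - m with hq
    set ip := ⟪g, x t - y⟫ with hip
    -- F2 : cocoercivity
    have F2 : r ≤ ip - 1 / (2 * L) * b ^ 2 :=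
      coco hL (hconv t) (hGt t) (hsmooth t) (x t) y
    -- F3 : self-boundedness
    have F3 : a ^ 2 ≤ 2 * L * (r + q) := by
      have h0 := self_bound hL (hGt t) (hsmooth t) (hbdd t) (x t)
      rw [← hg, ← ha, ← hm] at h0
      have e : 2 * L * (ℓ t (x t) - m) = 2 * L * (r + q) := by rw [hr, hq]; ring
      rw [e] at h0
      exact h0
    -- F1 : projection + expansion
    have F1 : P ≤ S - 2 * η * ip + η ^ 2 * a ^ 2 := by
      have hp2 : P ≤ ‖(x t - η • g) - y‖ ^ 2 := by
        rw [hP, hrec t ht, ← hg]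
        exact proj_contract hXconv proj hprojX hproj _ hy
      have e1 : (x t - η • g) - y = (x t - y) - η • g := by abel
      have e2 : ‖(x t - y) - η • g‖ ^ 2 = S - 2 * η * ip + η ^ 2 * a ^ 2 := by
        rw [norm_sub_sq_real, real_inner_smul_right, norm_smul, Real.norm_eq_abs,
          mul_pow, sq_abs, real_inner_comm]
        rw [hS, ha, hip]
        ring
      rw [e1, e2] at hp2
      exact hp2
    -- k1
    have k1 : ip ≤ (S - P) / (2 * η) + η / 2 * a ^ 2 := by
      have h1 : ip ≤ ((S - P) + η ^ 2 * a ^ 2) / (2 * η) := by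
        rw [le_div_iff₀ (by positivity)]
        nlinarith [F1]
      have e : ((S - P) + η ^ 2 * a ^ 2) / (2 * η) = (S - P) / (2 * η) + η / 2 * a ^ 2 := by
        field_simp
      linarith [e ▸ h1]
    -- k3 : Young
    have habc : a ≤ b + c := by
      rw [ha, hb, hc]
      calc ‖g‖ = ‖(g - h) + h‖ := by rw [sub_add_cancel]
        _ ≤ ‖g - h‖ + ‖h‖ := norm_add_le _ _
    have k3 : η / 4 * a ^ 2 ≤ 1 / (2 * L) * b ^ 2 + η / (2 * (2 - η * L)) * c ^ 2 := by
      have h2 : a ^ 2 ≤ (b + c) ^ 2 := by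
        have := pow_le_pow_left₀ (norm_nonneg g) habc 2
        simpa [ha] using this
      have h1 : η * L * (2 - η * L) * (b + c) ^ 2 ≤
          2 * (2 - η * L) * b ^ 2 + 2 * (η * L) * c ^ 2 := by
        linarith [sq_nonneg ((2 - η * L) * b - η * L * c)]
      have hnum : 0 ≤ 2 * (2 - η * L) * b ^ 2 + 2 * (η * L) * c ^ 2
          - η * L * (2 - η * L) * a ^ 2 := by
        linarith [h1, mul_le_mul_of_nonneg_left h2
          (by positivity : (0:ℝ) ≤ η * L * (2 - η * L))]
      have hdiv : 0 ≤ (2 * (2 - η * L) * b ^ 2 + 2 * (η * L) * c ^ 2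
          - η * L * (2 - η * L) * a ^ 2) / (4 * L * (2 - η * L)) :=
        div_nonneg hnum (by positivity)
      have e : (2 * (2 - η * L) * b ^ 2 + 2 * (η * L) * c ^ 2
          - η * L * (2 - η * L) * a ^ 2) / (4 * L * (2 - η * L)) =
          1 / (2 * L) * b ^ 2 + η / (2 * (2 - η * L)) * c ^ 2 - η / 4 * a ^ 2 := by
        field_simp
        ring
      linarith [e ▸ hdiv]
    -- k4
    have k4 : η / 4 * a ^ 2 ≤ η * L / 2 * (r + q) := by
      calc η / 4 * a ^ 2 ≤ η / 4 * (2 * L * (r + q)) :=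
            mul_le_mul_of_nonneg_left F3 (by positivity)
        _ = η * L / 2 * (r + q) := by ring
    -- k5
    have k5 : (1 - η * L / 2) * r ≤ (S - P) / (2 * η) + η * L / 2 * q
        + η / (2 * (2 - η * L)) * c ^ 2 := by linarith [F2, k1, k3, k4]
    -- conclude
    have hmul := mul_le_mul_of_nonneg_left k5
      (by positivity : (0:ℝ) ≤ 2 / (2 - η * L))
    have eL : 2 / (2 - η * L) * ((1 - η * L / 2) * r) = r := by
      field_simp
    have eR : 2 / (2 - η * L) * ((S - P) / (2 * η) + η * L / 2 * q
        + η / (2 * (2 - η * L)) * c ^ 2) =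
        (S - P) / ((2 - η * L) * η) + (η * L / (2 - η * L) * q
          + η / (2 - η * L) ^ 2 * c ^ 2) := by
      field_simp
      ring
    rw [eL, eR] at hmul
    exact hmul
  have hsum := Finset.sum_le_sum key
  rw [Finset.sum_add_distrib] at hsum
  have hT1 : ∑ t ∈ Finset.range T,
      (‖x t - y‖ ^ 2 - ‖x (t+1) - y‖ ^ 2) / ((2 - η * L) * η) =
      (‖x 0 - y‖ ^ 2 - ‖x T - y‖ ^ 2) / ((2 - η * L) * η) := by
    rw [← Finset.sum_div, Finset.sum_range_sub' (fun t => ‖x t - y‖ ^ 2)]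
  have hT2 : (‖x 0 - y‖ ^ 2 - ‖x T - y‖ ^ 2) / ((2 - η * L) * η) ≤
      ‖x 0 - y‖ ^ 2 / ((2 - η * L) * η) := by
    apply div_le_div_of_nonneg_right ?_ (by positivity)
    linarith [sq_nonneg ‖x T - y‖]
  have hT3 : ∑ t ∈ Finset.range T,
      (η * L / (2 - η * L) * (ℓ t y - sInf (Set.range (ℓ t))) +
        η / (2 - η * L) ^ 2 * ‖gradient (ℓ t) y‖ ^ 2) =
      (η / (2 - η * L)) *
        (L * (∑ t ∈ Finset.range T, (ℓ t y - sInf (Set.range (ℓ t)))) +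
          (1 / (2 - η * L)) * ∑ t ∈ Finset.range T, ‖gradient (ℓ t) y‖ ^ 2) := by
    rw [Finset.sum_add_distrib, ← Finset.mul_sum, ← Finset.mul_sum]
    have e2 : η / (2 - η * L) ^ 2 = η / (2 - η * L) * (1 / (2 - η * L)) := by
      rw [sq]
      field_simp [hA.ne']
    rw [e2]
    ring
  rw [hT1, hT3] at hsum
  linarith [hsum, hT2]
end
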